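/- (Proposition aVGcf) Let Z be a standard Gaussian random variable and let V be a Gamma(α, β) distributed random variable independent of Z, with α, β > 0. Let θ ∈ ℝ and σ > 0 be fixed. Then the characteristic function of the Variance Gamma variable X = θV + σ√V · Z is ψ_X(t) = (1 − iθt/β + t²σ²/(2β))^{-α} for all real t, where the complex power is the principal branch. -/

import Mathlib

open MeasureTheory ProbabilityTheory Complex

open MeasureTheory ProbabilityTheory Set Complex
open scoped ENNReal NNReal

lemma aux_int_real {a r : ℝ} (ha : 0 < a) (hr : 0 < r) :
    IntegrableOn (fun x : ℝ => x ^ (a - 1) * Real.exp (-(r * x))) (Ioi 0) := by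
  have h0 := Real.GammaIntegral_convergent ha
  have h1 : IntegrableOn (fun x : ℝ => Real.exp (-(r * x)) * (r * x) ^ (a - 1)) (Ioi 0) := by
    have := (integrableOn_Ioi_comp_mul_left_iff
      (fun x : ℝ => Real.exp (-x) * x ^ (a - 1)) 0 hr).mpr (by simpa using h0)
    simpa using this
  have h2 : IntegrableOn
      (fun x : ℝ => ((r : ℝ) ^ (a - 1))⁻¹ * (Real.exp (-(r * x)) * (r * x) ^ (a - 1)))
      (Ioi 0) := h1.const_mul _
  refine h2.congr_fun (fun x hx => ?_) measurableSet_Ioi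
  rw [mem_Ioi] at hx
  beta_reduce
  rw [Real.mul_rpow hr.le hx.le]
  field_simp [(Real.rpow_pos_of_pos hr (a-1)).ne']

lemma aux_norm {a : ℝ} {w : ℂ} {x : ℝ} (hx : 0 < x) :
    ‖(x : ℂ) ^ ((a : ℂ) - 1) * Complex.exp (-(w * x))‖
      = x ^ (a - 1) * Real.exp (-(w.re * x)) := by
  rw [norm_mul,
    Complex.norm_cpow_eq_rpow_re_of_pos hx, Complex.norm_exp]
  simp

lemma aux_int_complex {a : ℝ} (ha : 0 < a) {w : ℂ} (hw : 0 < w.re) :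
    IntegrableOn (fun x : ℝ => (x : ℂ) ^ ((a : ℂ) - 1) * Complex.exp (-(w * x))) (Ioi 0) := by
  refine Integrable.mono' (aux_int_real ha hw) ?_ ?_
  · refine ContinuousOn.aestronglyMeasurable ?_ measurableSet_Ioi
    refine ContinuousOn.mul ?_ (Continuous.continuousOn (by continuity))
    intro x hx
    refine (ContinuousAt.continuousWithinAt ?_)
    exact (continuousAt_ofReal_cpow_const x _ (Or.inr (ne_of_gt hx)))
  · filter_upwards [ae_restrict_mem measurableSet_Ioi] with x hx
    rw [aux_norm hx]

lemma aux_meas (a : ℝ) (w : ℂ) :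
    AEStronglyMeasurable (fun x : ℝ => (x : ℂ) ^ ((a : ℂ) - 1) * Complex.exp (-(w * x)))
      (volume.restrict (Ioi 0)) := by
  refine ContinuousOn.aestronglyMeasurable ?_ measurableSet_Ioi
  refine ContinuousOn.mul ?_ (Continuous.continuousOn (by continuity))
  intro x hx
  exact (continuousAt_ofReal_cpow_const x _ (Or.inr (ne_of_gt hx))).continuousWithinAt

set_option maxHeartbeats 1000000 in
lemma aux_diff_f {a : ℝ} (ha : 0 < a) {w₀ : ℂ} (hw₀ : 0 < w₀.re) :
    DifferentiableAt ℂ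
      (fun w : ℂ => ∫ x : ℝ in Ioi 0, (x : ℂ) ^ ((a : ℂ) - 1) * Complex.exp (-(w * x))) w₀ := by
  set ε := w₀.re / 2 with hε
  have hεpos : 0 < ε := by positivity
  set F : ℂ → ℝ → ℂ := fun w x => (x : ℂ) ^ ((a : ℂ) - 1) * Complex.exp (-(w * x)) with hF
  set F' : ℂ → ℝ → ℂ := fun w x =>
    (x : ℂ) ^ ((a : ℂ) - 1) * (Complex.exp (-(w * x)) * (-(x:ℂ))) with hF'
  set bound : ℝ → ℝ := fun x => x ^ ((a + 1) - 1) * Real.exp (-(ε * x)) with hbound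
  have hmeas : ∀ᶠ w in nhds w₀, AEStronglyMeasurable (F w) (volume.restrict (Ioi 0)) :=
    Filter.Eventually.of_forall fun w => aux_meas a w
  have hint : Integrable (F w₀) (volume.restrict (Ioi 0)) := aux_int_complex ha hw₀
  have hmeas' : AEStronglyMeasurable (F' w₀) (volume.restrict (Ioi 0)) := by
    refine ContinuousOn.aestronglyMeasurable ?_ measurableSet_Ioi
    refine ContinuousOn.mul ?_ (Continuous.continuousOn (by continuity))
    intro x hx
    exact (continuousAt_ofReal_cpow_const x _ (Or.inr (ne_of_gt hx))).continuousWithinAt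
  have hbd : ∀ᵐ x ∂(volume.restrict (Ioi 0)), ∀ w ∈ Metric.ball w₀ ε, ‖F' w x‖ ≤ bound x := by
    filter_upwards [ae_restrict_mem measurableSet_Ioi] with x hx
    intro w hwball
    have hre : ε ≤ w.re := by
      rw [Metric.mem_ball, Complex.dist_eq] at hwball
      have h2 : |(w - w₀).re| < ε := lt_of_le_of_lt (Complex.abs_re_le_norm _) hwball
      have h3 := abs_lt.mp h2
      simp only [Complex.sub_re] at h3
      have := h3.1
      rw [hε] at *
      linarith
    have hnorm : ‖F' w x‖ = x ^ (a - 1) * (Real.exp (-(w.re * x)) * x) := by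
      rw [hF']
      simp only [norm_mul]
      rw [
        Complex.norm_cpow_eq_rpow_re_of_pos hx, Complex.norm_exp]
      simp only [Complex.sub_re, Complex.ofReal_re, Complex.one_re, Complex.neg_re,
        Complex.mul_re, Complex.ofReal_im, mul_zero, sub_zero, norm_neg,
        Complex.norm_real, Real.norm_eq_abs]
      rw [abs_of_pos hx]
    rw [hnorm, hbound]
    have hxa : x ^ (a - 1) * x = x ^ ((a + 1) - 1) := by
      rw [← Real.rpow_add_one (ne_of_gt hx) (a - 1)]; norm_num
    have h1 : x ^ (a - 1) * (Real.exp (-(w.re * x)) * x)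
        = x ^ ((a+1) - 1) * Real.exp (-(w.re * x)) := by
      rw [← hxa]; ring
    rw [h1]
    have hle : Real.exp (-(w.re * x)) ≤ Real.exp (-(ε * x)) := by
      apply Real.exp_le_exp.mpr
      have := mul_le_mul_of_nonneg_right hre (le_of_lt hx)
      linarith
    exact mul_le_mul_of_nonneg_left hle (Real.rpow_nonneg hx.le _)
  have hbint : Integrable bound (volume.restrict (Ioi 0)) := aux_int_real (by linarith) hεpos
  have hdiff : ∀ᵐ x ∂(volume.restrict (Ioi 0)), ∀ w ∈ Metric.ball w₀ ε,
      HasDerivAt (fun w => F w x) (F' w x) w := by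
    filter_upwards with x
    intro w _
    have h1 : HasDerivAt (fun w : ℂ => -(w * x)) (-(x:ℂ)) w := by
      have h := ((hasDerivAt_id w).mul_const (x:ℂ)).neg
      rw [one_mul] at h
      exact h
    exact (h1.cexp).const_mul ((x : ℂ) ^ ((a : ℂ) - 1))
  have key := hasDerivAt_integral_of_dominated_loc_of_deriv_le (Metric.ball_mem_nhds w₀ hεpos) hmeas hint hmeas'
    hbd hbint hdiff
  exact key.2.differentiableAt

lemma gammaLaplace {a : ℝ} (ha : 0 < a) {w : ℂ} (hw : 0 < w.re) :
    ∫ x : ℝ in Ioi 0, (x : ℂ) ^ ((a : ℂ) - 1) * Complex.exp (-(w * x))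
      = Complex.Gamma a * w ^ (-(a : ℂ)) := by
  set U : Set ℂ := {z : ℂ | 0 < z.re} with hU
  set f : ℂ → ℂ := fun w => ∫ x : ℝ in Ioi 0, (x : ℂ) ^ ((a : ℂ) - 1) * Complex.exp (-(w * x))
  set g : ℂ → ℂ := fun w => Complex.Gamma a * w ^ (-(a : ℂ))
  have hUopen : IsOpen U := isOpen_lt continuous_const Complex.continuous_re
  have hUconn : IsPreconnected U := (convex_halfSpace_re_gt 0).isPreconnected
  have hfa : AnalyticOnNhd ℂ f U := by
    refine DifferentiableOn.analyticOnNhd (fun z hz => ?_) hUopen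
    exact (aux_diff_f ha hz).differentiableWithinAt
  have hga : AnalyticOnNhd ℂ g U := by
    refine DifferentiableOn.analyticOnNhd (fun z hz => ?_) hUopen
    refine DifferentiableAt.differentiableWithinAt ?_
    exact (differentiableAt_id.cpow (differentiableAt_const _) (Or.inl hz)).const_mul _
  have hagree : ∀ r : ℝ, 0 < r → f r = g r := by
    intro r hr
    have h1 := Complex.integral_cpow_mul_exp_neg_mul_Ioi
      (a := (a : ℂ)) (by simpa using ha) hr
    have h2 : ((1 : ℂ) / r) ^ (a : ℂ) = (r : ℂ) ^ (-(a : ℂ)) := by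
      have harg : Complex.arg r ≠ Real.pi := by
        rw [Complex.arg_ofReal_of_nonneg hr.le]; exact Real.pi_ne_zero.symm
      rw [one_div, Complex.inv_cpow _ _ harg, ← Complex.cpow_neg]
    simp only [f, g]
    calc (∫ x : ℝ in Ioi 0, (x : ℂ) ^ ((a : ℂ) - 1) * Complex.exp (-((r : ℂ) * x)))
        = (1 / r : ℂ) ^ (a : ℂ) * Complex.Gamma a := h1
      _ = Complex.Gamma a * (r : ℂ) ^ (-(a : ℂ)) := by rw [h2]; ring
  have hseq : Filter.Tendsto (fun n : ℕ => ((1 + (n + 1 : ℝ)⁻¹ : ℝ) : ℂ))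
      Filter.atTop (nhdsWithin 1 {(1 : ℂ)}ᶜ) := by
    apply tendsto_nhdsWithin_of_tendsto_nhds_of_eventually_within
    · have : Filter.Tendsto (fun n : ℕ => (1 + (n + 1 : ℝ)⁻¹ : ℝ)) Filter.atTop (nhds 1) := by
        have h := tendsto_one_div_add_atTop_nhds_zero_nat (𝕜 := ℝ)
        simp only [one_div] at h
        simpa using (tendsto_const_nhds (x := (1:ℝ))).add h
      have := (Complex.continuous_ofReal.tendsto 1).comp this
      exact this
    · filter_upwards with n
      simp only [mem_compl_iff, mem_singleton_iff]
      intro hcon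
      have : (1 + (n + 1 : ℝ)⁻¹ : ℝ) = 1 := by exact_mod_cast hcon
      have hpos : 0 < ((n : ℝ) + 1)⁻¹ := by positivity
      linarith
  have hfreq : ∃ᶠ z in nhdsWithin 1 {(1 : ℂ)}ᶜ, f z = g z := by
    apply hseq.frequently
    apply Filter.Frequently.of_forall
    intro n
    exact hagree _ (by positivity)
  have := hfa.eqOn_of_preconnected_of_frequently_eq hga hUconn
    (show (1 : ℂ) ∈ U by simp [hU]) hfreq
  exact this hw

lemma gauss_cf (s : ℝ) :
    ∫ z : ℝ, Complex.exp (Complex.I * s * z) ∂(gaussianReal 0 1)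
      = Complex.exp (-(s ^ 2) / 2) := by
  rw [gaussianReal_of_var_ne_zero 0 one_ne_zero]
  have hpdf : (gaussianPDF 0 1) = fun x => ((gaussianPDFReal 0 1 x).toNNReal : ℝ≥0∞) := by
    funext x; rfl
  rw [hpdf, integral_withDensity_eq_integral_smul
    ((measurable_gaussianPDFReal 0 1).real_toNNReal)]
  have hpt : ∀ z : ℝ, (gaussianPDFReal 0 1 z).toNNReal • Complex.exp (Complex.I * s * z)
      = ((Real.sqrt (2 * Real.pi))⁻¹ : ℝ) *
        Complex.exp ((-(1/2) : ℂ) * z ^ 2 + (Complex.I * s) * z + 0) := by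
    intro z
    have hnn : 0 ≤ gaussianPDFReal 0 1 z := gaussianPDFReal_nonneg 0 1 z
    rw [NNReal.smul_def, Real.coe_toNNReal _ hnn, Complex.real_smul]
    unfold gaussianPDFReal
    have e1 : (2 * Real.pi * (1 : ℝ≥0) : ℝ) = 2 * Real.pi := by norm_num
    rw [e1, Complex.ofReal_mul, Complex.ofReal_exp, mul_assoc, ← Complex.exp_add,
      Complex.ofReal_inv]
    congr 2
    push_cast
    ring
  simp_rw [hpt]
  rw [integral_const_mul, integral_cexp_quadratic (by norm_num : (-(1/2) : ℂ).re < 0)]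
  have h1 : ((0 : ℂ) - (Complex.I * s) ^ 2 / (4 * (-(1/2)))) = -(s ^ 2) / 2 := by
    rw [mul_pow, Complex.I_sq]
    ring
  have h2 : ((Real.pi : ℂ) / -(-(1/2))) ^ ((1 : ℂ)/2) = ((Real.sqrt (2 * Real.pi) : ℝ) : ℂ) := by
    have : ((Real.pi : ℂ) / -(-(1/2))) = ((2 * Real.pi : ℝ) : ℂ) := by push_cast; ring
    rw [this, show ((1:ℂ)/2) = ((1/2 : ℝ) : ℂ) by norm_num,
      ← Complex.ofReal_cpow (by positivity : (0:ℝ) ≤ 2 * Real.pi), Real.sqrt_eq_rpow]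
  rw [h1, h2, ← mul_assoc, ← Complex.ofReal_mul]
  rw [inv_mul_cancel₀ (by positivity : Real.sqrt (2 * Real.pi) ≠ 0)]
  simp

lemma aux_cpow_ofReal_mul {r : ℝ} (hr : 0 < r) {z : ℂ} (hz : z ≠ 0) (s : ℂ) :
    ((r : ℂ) * z) ^ s = (r : ℂ) ^ s * z ^ s := by
  have hr' : (r : ℂ) ≠ 0 := Complex.ofReal_ne_zero.mpr hr.ne'
  rw [Complex.cpow_def_of_ne_zero (mul_ne_zero hr' hz),
    Complex.cpow_def_of_ne_zero hr', Complex.cpow_def_of_ne_zero hz,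
    Complex.log_ofReal_mul hr hz, ← Complex.exp_add, Complex.ofReal_log hr.le]
  ring_nf

set_option maxHeartbeats 1000000

/-- **Proposition aVGcf.** The characteristic function of the Variance Gamma
variable `X = θV + σ√V ⬝ Z`, where `Z` is standard Gaussian and `V` is an independent
`Gamma(α, β)` variable, is `t ↦ (1 - iθt/β + t²σ²/(2β))^(-α)` (principal branch). -/
theorem charFun_varianceGamma
    {Ω : Type*} [MeasurableSpace Ω] (P : Measure Ω) [IsProbabilityMeasure P]
    (α β θ σ : ℝ) (hα : 0 < α) (hβ : 0 < β) (hσ : 0 < σ)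
    (V Z : Ω → ℝ) (hVm : Measurable V) (hZm : Measurable Z)
    (hV : Measure.map V P = gammaMeasure α β)
    (hZ : Measure.map Z P = gaussianReal 0 1)
    (hindep : IndepFun V Z P) (t : ℝ) :
    ∫ ω, Complex.exp (Complex.I * t * (θ * V ω + σ * Real.sqrt (V ω) * Z ω)) ∂P
      = ((1 : ℂ) - Complex.I * θ * t / β + t ^ 2 * σ ^ 2 / (2 * β)) ^ (-(α : ℂ)) := by
  classical
  have hprodm : Measurable fun ω => (V ω, Z ω) := hVm.prodMk hZm
  set f : ℝ × ℝ → ℂ :=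
    fun p => Complex.exp (Complex.I * t * (θ * p.1 + σ * Real.sqrt p.1 * p.2)) with hfdef
  have hfc : Continuous f := by
    rw [hfdef]
    apply Complex.continuous_exp.comp
    apply Continuous.mul continuous_const
    refine Continuous.add ?_ ?_
    · exact continuous_const.mul (Complex.continuous_ofReal.comp continuous_fst)
    · refine Continuous.mul ?_ (Complex.continuous_ofReal.comp continuous_snd)
      exact continuous_const.mul
        (Complex.continuous_ofReal.comp (Real.continuous_sqrt.comp continuous_fst))
  have h1 : ∫ ω, Complex.exp (Complex.I * t * (θ * V ω + σ * Real.sqrt (V ω) * Z ω)) ∂P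
      = ∫ p, f p ∂(Measure.map (fun ω => (V ω, Z ω)) P) := by
    rw [integral_map hprodm.aemeasurable hfc.aestronglyMeasurable]
  have hmap : Measure.map (fun ω => (V ω, Z ω)) P
      = (gammaMeasure α β).prod (gaussianReal 0 1) := by
    rw [← hV, ← hZ]
    exact (indepFun_iff_map_prod_eq_prod_map_map hVm.aemeasurable hZm.aemeasurable).mp hindep
  haveI : IsProbabilityMeasure (gammaMeasure α β) := isProbabilityMeasure_gammaMeasure hα hβ
  have hnorm : ∀ p : ℝ × ℝ, ‖f p‖ = 1 := by
    intro p
    rw [hfdef]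
    rw [Complex.norm_exp]
    have : (Complex.I * t * ((θ * p.1 + σ * Real.sqrt p.1 * p.2 : ℝ) : ℂ)).re = 0 := by
      simp [Complex.mul_re, Complex.mul_im]
    rw [show (Complex.I * ↑t * (↑θ * ↑p.1 + ↑σ * ↑(Real.sqrt p.1) * ↑p.2))
        = Complex.I * t * ((θ * p.1 + σ * Real.sqrt p.1 * p.2 : ℝ) : ℂ) by push_cast; ring,
      this, Real.exp_zero]
  have hfint : Integrable f ((gammaMeasure α β).prod (gaussianReal 0 1)) := by
    refine (integrable_const (1 : ℝ)).mono' hfc.aestronglyMeasurable ?_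
    filter_upwards with p
    exact (hnorm p).le
  rw [h1, hmap, integral_prod _ hfint]
  -- inner integral over the Gaussian
  have hinner : ∀ v : ℝ, (∫ z, f (v, z) ∂(gaussianReal 0 1))
      = Complex.exp (Complex.I * t * (θ * v))
        * Complex.exp (-(((t * σ * Real.sqrt v : ℝ) : ℂ) ^ 2) / 2) := by
    intro v
    have hptz : ∀ z : ℝ, f (v, z) = Complex.exp (Complex.I * t * (θ * v))
        * Complex.exp (Complex.I * ((t * σ * Real.sqrt v : ℝ) : ℂ) * z) := by
      intro z
      rw [hfdef, ← Complex.exp_add]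
      push_cast
      ring_nf
    simp_rw [hptz]
    rw [integral_const_mul, gauss_cf (t * σ * Real.sqrt v)]
  simp_rw [hinner]
  -- outer integral over the Gamma measure
  unfold gammaMeasure
  have hpdf : (gammaPDF α β) = fun x => ((gammaPDFReal α β x).toNNReal : ℝ≥0∞) := by
    funext x; rfl
  rw [hpdf, integral_withDensity_eq_integral_smul ((measurable_gammaPDFReal α β).real_toNNReal)]
  set w : ℂ := ((β + t ^ 2 * σ ^ 2 / 2 : ℝ) : ℂ) - Complex.I * ((t * θ : ℝ) : ℂ) with hwdef
  have hwre : 0 < w.re := by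
    rw [hwdef]
    simp only [Complex.sub_re, Complex.ofReal_re, Complex.mul_re, Complex.I_re, Complex.I_im,
      Complex.ofReal_im, zero_mul, one_mul, mul_zero, sub_zero, zero_sub, sub_neg_eq_add]
    norm_num
    positivity
  have hwne : w ≠ 0 := by
    intro hcon
    rw [hcon] at hwre
    simp at hwre
  set G : ℝ → ℂ := fun x => (gammaPDFReal α β x).toNNReal •
    (Complex.exp (Complex.I * t * (θ * x))
      * Complex.exp (-(((t * σ * Real.sqrt x : ℝ) : ℂ) ^ 2) / 2)) with hGdef
  have hzero : ∀ᵐ x : ℝ ∂volume, x ∉ Set.Ioi (0:ℝ) → G x = 0 := by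
    have h0 : ∀ᵐ x : ℝ ∂volume, x ≠ 0 := by
      rw [ae_iff]
      simpa using Real.volume_singleton (a := (0:ℝ))
    filter_upwards [h0] with x hx0 hnot
    have hxlt : x < 0 := lt_of_le_of_ne (not_lt.mp hnot) hx0
    have : gammaPDFReal α β x = 0 := by
      unfold gammaPDFReal
      rw [if_neg (not_le.mpr hxlt)]
    rw [hGdef]
    simp [this]
  rw [show (∫ x : ℝ, G x) = ∫ x : ℝ in Set.Ioi 0, G x from
    (setIntegral_eq_integral_of_ae_compl_eq_zero hzero).symm]
  have hpt : ∀ x ∈ Set.Ioi (0:ℝ), G x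
      = ((β ^ α / Real.Gamma α : ℝ) : ℂ)
        * ((x : ℂ) ^ ((α : ℂ) - 1) * Complex.exp (-(w * x))) := by
    intro x hx
    rw [Set.mem_Ioi] at hx
    have hnn : 0 ≤ gammaPDFReal α β x := gammaPDFReal_nonneg hα hβ x
    rw [hGdef]
    simp only
    rw [NNReal.smul_def, Real.coe_toNNReal _ hnn, Complex.real_smul]
    unfold gammaPDFReal
    rw [if_pos hx.le]
    have hsq : Real.sqrt x ^ 2 = x := Real.sq_sqrt hx.le
    have hxpow : ((x ^ (α - 1) : ℝ) : ℂ) = (x : ℂ) ^ ((α : ℂ) - 1) := by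
      rw [Complex.ofReal_cpow hx.le]
      push_cast
      rfl
    push_cast [hxpow]
    rw [mul_assoc, mul_assoc, ← Complex.exp_add, ← Complex.exp_add]
    have hexp : -(↑β * ↑x) + (Complex.I * ↑t * (↑θ * ↑x)
          + -((↑t * ↑σ * ↑(Real.sqrt x)) ^ 2) / 2) = -(w * x) := by
      have : ((Real.sqrt x : ℂ)) ^ 2 = (x : ℂ) := by
        rw [← Complex.ofReal_pow, hsq]
      rw [hwdef, mul_pow, mul_pow, this]
      push_cast
      ring
    rw [hexp]
  rw [setIntegral_congr_fun measurableSet_Ioi hpt, integral_const_mul,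
    gammaLaplace hα hwre, Complex.Gamma_ofReal]
  have hΓ : (Real.Gamma α : ℂ) ≠ 0 :=
    Complex.ofReal_ne_zero.mpr (Real.Gamma_pos_of_pos hα).ne'
  have hconst : ((β ^ α / Real.Gamma α : ℝ) : ℂ) * ((Real.Gamma α : ℂ) * w ^ (-(α:ℂ)))
      = ((β ^ α : ℝ) : ℂ) * w ^ (-(α:ℂ)) := by
    push_cast
    field_simp
  rw [hconst]
  -- final algebra
  have htarget : ((1 : ℂ) - Complex.I * θ * t / β + t ^ 2 * σ ^ 2 / (2 * β))
      = ((β⁻¹ : ℝ) : ℂ) * w := by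
    rw [hwdef]
    have hb : (β : ℂ) ≠ 0 := Complex.ofReal_ne_zero.mpr hβ.ne'
    push_cast
    field_simp
    ring
  rw [htarget, aux_cpow_ofReal_mul (inv_pos.mpr hβ) hwne]
  have hbpow : ((β⁻¹ : ℝ) : ℂ) ^ (-(α:ℂ)) = ((β ^ α : ℝ) : ℂ) := by
    rw [show (-(α:ℂ)) = ((-α : ℝ) : ℂ) by push_cast; ring,
      ← Complex.ofReal_cpow (inv_nonneg.mpr hβ.le)]
    rw [Real.rpow_neg (inv_nonneg.mpr hβ.le), Real.inv_rpow hβ.le, inv_inv]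
  rw [hbpow]
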